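/- There exists a tensor T ∈ k^{n₁} ⊗ k^{n₂} ⊗ k^{n₃} with multilinear rank (μ₁, μ₂, μ₃) if and only if μᵢ ≤ nᵢ for all i and μ₁ ≤ μ₂·μ₃, μ₂ ≤ μ₁·μ₃, μ₃ ≤ μ₁·μ₂. -/

import Mathlib

open Matrix Submodule Module

open Matrix Submodule Module

lemma rank_ge_aux {k : Type*} [Field k] {m n : Type*} [Fintype m] [Fintype n]
    [DecidableEq m] [DecidableEq n] {r : ℕ} (M : Matrix m n k) (f : Fin r → m) (g : Fin r → n)
    (h : ∀ t s, M (f t) (g s) = if t = s then (1:k) else 0) : r ≤ M.rank := by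
  classical
  set P : Matrix (Fin r) m k := Matrix.of fun t i => if i = f t then (1:k) else 0 with hP
  set Q : Matrix n (Fin r) k := Matrix.of fun j s => if j = g s then (1:k) else 0 with hQ
  have hPMQ : P * M * Q = 1 := by
    ext t s
    simp only [Matrix.mul_apply, hP, hQ, Matrix.of_apply, ite_mul, mul_ite, one_mul, mul_one,
      zero_mul, mul_zero, Finset.sum_ite_eq, Finset.sum_ite_eq', Finset.mem_univ, if_true]
    rw [h t s, Matrix.one_apply]
  calc (r : ℕ) = Fintype.card (Fin r) := (Fintype.card_fin r).symm
    _ = (1 : Matrix (Fin r) (Fin r) k).rank := (Matrix.rank_one).symm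
    _ = (P * M * Q).rank := by rw [hPMQ]
    _ ≤ (P * M).rank := Matrix.rank_mul_le_left _ _
    _ ≤ M.rank := Matrix.rank_mul_le_right _ _

lemma rank_le_aux {k : Type*} [Field k] {m n : Type*} [Fintype m] [Fintype n]
    {r : ℕ} (M : Matrix m n k) (f : Fin r → m)
    (h : ∀ i, (∃ t, i = f t) ∨ M i = 0) : M.rank ≤ r := by
  rw [M.rank_eq_finrank_span_row]
  have hle : Submodule.span k (Set.range M) ≤ Submodule.span k (Set.range (M ∘ f)) := by
    rw [Submodule.span_le]
    rintro _ ⟨i, rfl⟩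
    rcases h i with ⟨t, rfl⟩ | hz
    · exact Submodule.subset_span ⟨t, rfl⟩
    · rw [hz]; exact Submodule.zero_mem _
  calc finrank k (Submodule.span k (Set.range M))
      ≤ finrank k (Submodule.span k (Set.range (M ∘ f))) := Submodule.finrank_mono hle
    _ ≤ Fintype.card (Fin r) := finrank_range_le_card _
    _ = r := Fintype.card_fin r

/-- Explicit injection `[0,α) → [0,β)×[0,γ)` (for `γ ≤ β`, `α ≤ β*γ`) whose
first β values are `(t, min t (γ-1))`. -/
def Phi (β γ t : ℕ) : ℕ × ℕ :=
  if t < β then (t, min t (γ - 1))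
  else ((t - β) % β, if (t - β) / β < min ((t - β) % β) (γ - 1) then (t - β) / β else (t - β) / β + 1)

lemma Phi_branch1 {β γ t : ℕ} (h : t < β) : Phi β γ t = (t, min t (γ - 1)) := if_pos h

lemma Phi_fst_lt {β γ t : ℕ} (hβ : 0 < β) : (Phi β γ t).1 < β := by
  unfold Phi; split
  · simpa
  · simpa using Nat.mod_lt _ hβ

lemma Phi_snd_lt {β γ t : ℕ} (hβ : 0 < β) (hγ : 0 < γ) (ht : t < β * γ) :
    (Phi β γ t).2 < γ := by
  unfold Phi; split
  · show min t (γ - 1) < γ; omega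
  · rename_i h
    have hdiv : (t - β) / β < γ - 1 := by
      apply Nat.div_lt_of_lt_mul
      have hh : β * (γ - 1) + β * 1 = β * γ := by
        rw [← Nat.mul_add]; congr 1; omega
      omega
    simp only
    split <;> omega

lemma ite_succ_ne_min (m l : ℕ) : (if l < m then l else l + 1) ≠ m := by split <;> omega

lemma Phi_inj {β γ t₁ t₂ : ℕ} (hβ : 0 < β) (h1 : t₁ < β * γ) (h2 : t₂ < β * γ)
    (h : Phi β γ t₁ = Phi β γ t₂) : t₁ = t₂ := by
  unfold Phi at h
  by_cases c₁ : t₁ < β <;> by_cases c₂ : t₂ < β <;>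
    simp only [c₁, c₂, if_true, if_false, Prod.mk.injEq, if_pos, if_neg] at h
  · exact h.1
  · exfalso
    obtain ⟨h1', h2'⟩ := h
    rw [h1'] at h2'
    exact ite_succ_ne_min _ _ h2'.symm
  · exfalso
    obtain ⟨h1', h2'⟩ := h
    rw [← h1'] at h2'
    exact ite_succ_ne_min _ _ h2'
  · obtain ⟨h1', h2'⟩ := h
    rw [h1'] at h2'
    have hl : (t₁ - β) / β = (t₂ - β) / β := by
      revert h2'
      split <;> split <;> omega
    have e1 := Nat.div_add_mod (t₁ - β) β
    have e2 := Nat.div_add_mod (t₂ - β) β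
    rw [hl, h1'] at e1
    omega

lemma Phi_eq_iff {β γ t₁ t₂ : ℕ} (hβ : 0 < β) (h1 : t₁ < β * γ) (h2 : t₂ < β * γ) :
    Phi β γ t₁ = Phi β γ t₂ ↔ t₁ = t₂ :=
  ⟨Phi_inj hβ h1 h2, fun h => by rw [h]⟩


lemma flatten_rank_le_mul {k : Type*} [Field k] {a b c : ℕ} (T : Fin a → Fin b → Fin c → k) :
    (Matrix.of fun i (p : Fin b × Fin c) => T i p.1 p.2).rank ≤
      (Matrix.of fun j (p : Fin a × Fin c) => T p.1 j p.2).rank *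
        (Matrix.of fun l (p : Fin a × Fin b) => T p.1 p.2 l).rank := by
  classical
  set A : Matrix (Fin a) (Fin b × Fin c) k := Matrix.of fun i (p : Fin b × Fin c) => T i p.1 p.2
  set B : Matrix (Fin b) (Fin a × Fin c) k := Matrix.of fun j (p : Fin a × Fin c) => T p.1 j p.2
  set C : Matrix (Fin c) (Fin a × Fin b) k := Matrix.of fun l (p : Fin a × Fin b) => T p.1 p.2 l
  set C₂ : Submodule k (Fin b → k) := Submodule.span k (Set.range Bᵀ) with hC₂def
  set C₃ : Submodule k (Fin c → k) := Submodule.span k (Set.range Cᵀ) with hC₃def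
  have hC₂ : finrank k C₂ = B.rank := (B.rank_eq_finrank_span_cols).symm
  have hC₃ : finrank k C₃ = C.rank := (C.rank_eq_finrank_span_cols).symm
  let u : Basis (Fin B.rank) k C₂ := Module.finBasisOfFinrankEq k C₂ hC₂
  let v : Basis (Fin C.rank) k C₃ := Module.finBasisOfFinrankEq k C₃ hC₃
  obtain ⟨C₂', hcompl⟩ := Submodule.exists_isCompl C₂
  let π := C₂.projectionOnto C₂' hcompl
  let F : Fin B.rank → ((Fin b → k) →ₗ[k] k) := fun p => (u.coord p).comp π
  have hF : ∀ (p) (x : C₂), F p (x : Fin b → k) = u.repr x p := by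
    intro p x
    simp only [F, LinearMap.comp_apply, Submodule.projectionOnto_apply_left hcompl x,
      Basis.coord_apply]
    rw [show π (x : Fin b → k) = x from Submodule.projectionOnto_apply_left hcompl x]
  -- basis product functions
  let bp : Fin B.rank × Fin C.rank → (Fin b × Fin c → k) := fun pq (jl : Fin b × Fin c) =>
    (u pq.1 : Fin b → k) jl.1 * (v pq.2 : Fin c → k) jl.2
  have key : ∀ i, A i ∈ Submodule.span k (Set.range bp) := by
    intro i
    have hcol : ∀ l : Fin c, (fun j => T i j l) ∈ C₂ := fun l =>
      Submodule.subset_span ⟨(i, l), rfl⟩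
    set w : Fin B.rank → (Fin c → k) := fun p l => F p (fun j => T i j l) with hwdef
    have hw : ∀ p, w p ∈ C₃ := by
      intro p
      have hsum : w p = ∑ j : Fin b, (F p ((Pi.single j 1 : Fin b → k))) • (fun l => T i j l) := by
        funext l
        have hx : (fun j => T i j l) = ∑ j : Fin b, T i j l • (Pi.single j 1 : Fin b → k) := by
          funext j'
          simp [Pi.single_apply, Finset.sum_apply]
        rw [hwdef]
        simp only [hx, map_sum, LinearMap.map_smul, smul_eq_mul, Finset.sum_apply, Pi.smul_apply]
        exact Finset.sum_congr rfl fun j _ => mul_comm _ _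
      rw [hsum]
      exact Submodule.sum_mem _ fun j _ =>
        Submodule.smul_mem _ _ (Submodule.subset_span ⟨(i, j), rfl⟩)
    set d : Fin B.rank → Fin C.rank → k := fun p q => v.repr ⟨w p, hw p⟩ q with hddef
    have hrow : A i = ∑ pq : Fin B.rank × Fin C.rank, d pq.1 pq.2 • bp pq := by
      funext jl
      obtain ⟨j, l⟩ := jl
      have h1 : T i j l = ∑ p, (u.repr ⟨fun j => T i j l, hcol l⟩ p) * (u p : Fin b → k) j := by
        have := u.sum_repr ⟨fun j => T i j l, hcol l⟩
        have h2 := congrArg (Subtype.val) this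
        rw [show ((⟨fun j => T i j l, hcol l⟩ : C₂) : Fin b → k) = fun j => T i j l from rfl] at h2
        have h3 := congrFun h2 j
        simp only [Submodule.coe_sum, Submodule.coe_smul, Finset.sum_apply, Pi.smul_apply, smul_eq_mul] at h3
        exact h3.symm
      have h4 : ∀ p, u.repr ⟨fun j => T i j l, hcol l⟩ p = w p l := by
        intro p
        rw [hwdef]
        exact (hF p ⟨fun j => T i j l, hcol l⟩).symm
      have h5 : ∀ p, w p l = ∑ q, d p q * (v q : Fin c → k) l := by
        intro p
        have := v.sum_repr ⟨w p, hw p⟩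
        have h2 := congrArg (Subtype.val) this
        have h3 := congrFun h2 l
        simp only [Submodule.coe_sum, Submodule.coe_smul, Finset.sum_apply, Pi.smul_apply, smul_eq_mul] at h3
        simpa [hddef] using h3.symm
      calc A i (j, l) = T i j l := rfl
        _ = ∑ p, (∑ q, d p q * (v q : Fin c → k) l) * (u p : Fin b → k) j := by
            rw [h1]; exact Finset.sum_congr rfl fun p _ => by rw [h4, h5]
        _ = ∑ p, ∑ q, d p q * ((u p : Fin b → k) j * (v q : Fin c → k) l) := by
            refine Finset.sum_congr rfl fun p _ => ?_
            rw [Finset.sum_mul]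
            exact Finset.sum_congr rfl fun q _ => by ring
        _ = ∑ pq : Fin B.rank × Fin C.rank, d pq.1 pq.2 • bp pq (j, l) := by
            rw [Fintype.sum_prod_type]; rfl
        _ = (∑ pq : Fin B.rank × Fin C.rank, d pq.1 pq.2 • bp pq) (j, l) := by
            simp [Finset.sum_apply]
    rw [hrow]
    exact Submodule.sum_mem _ fun pq _ =>
      Submodule.smul_mem _ _ (Submodule.subset_span ⟨pq, rfl⟩)
  rw [A.rank_eq_finrank_span_row]
  have hle : Submodule.span k (Set.range A) ≤ Submodule.span k (Set.range bp) := by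
    rw [Submodule.span_le]; rintro _ ⟨i, rfl⟩; exact key i
  calc finrank k (Submodule.span k (Set.range A))
      ≤ finrank k (Submodule.span k (Set.range bp)) := Submodule.finrank_mono hle
    _ ≤ Fintype.card (Fin B.rank × Fin C.rank) := finrank_range_le_card _
    _ = B.rank * C.rank := by simp


lemma rank_submatrix_id_equiv {k : Type*} [Field k] {m n n' : Type*} [Fintype m] [Fintype n]
    [Fintype n'] (A : Matrix m n k) (e : n' ≃ n) : (A.submatrix id e).rank = A.rank := by
  rw [Matrix.rank, Matrix.rank, Matrix.mulVecLin_submatrix, LinearMap.range_comp,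
    LinearMap.range_comp, LinearMap.range_eq_top.mpr (LinearMap.funLeft_surjective_of_injective
      _ _ _ e.symm.injective), Submodule.map_top]
  have hid : LinearMap.funLeft k k (id : m → m) = LinearMap.id := by
    ext x
    rfl
  rw [hid, Submodule.map_id]
lemma construct_sorted {k : Type*} [Field k] {a b c α β γ : ℕ}
    (hαa : α ≤ a) (hβb : β ≤ b) (hγc : γ ≤ c)
    (hβα : β ≤ α) (hγβ : γ ≤ β) (hαβγ : α ≤ β * γ)
    (hβ : 0 < β) (hγ : 0 < γ) :
    ∃ T : Fin a → Fin b → Fin c → k,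
      (Matrix.of fun i (p : Fin b × Fin c) => T i p.1 p.2).rank = α ∧
      (Matrix.of fun j (p : Fin a × Fin c) => T p.1 j p.2).rank = β ∧
      (Matrix.of fun l (p : Fin a × Fin b) => T p.1 p.2 l).rank = γ := by
  classical
  set T : Fin a → Fin b → Fin c → k := fun i j l =>
    if (i : ℕ) < α ∧ Phi β γ (i : ℕ) = ((j : ℕ), (l : ℕ)) then 1 else 0 with hT
  refine ⟨T, ?_, ?_, ?_⟩
  · -- mode 1 : rank = α
    refine le_antisymm ?_ ?_
    · refine rank_le_aux _ (fun t : Fin α => (⟨t, lt_of_lt_of_le t.2 hαa⟩ : Fin a)) fun i => ?_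
      by_cases hi : (i : ℕ) < α
      · exact Or.inl ⟨⟨(i : ℕ), hi⟩, Fin.ext rfl⟩
      · refine Or.inr ?_
        funext p
        simp only [Matrix.of_apply, hT, Pi.zero_apply]
        rw [if_neg]; tauto
    · refine rank_ge_aux _ (fun t : Fin α => (⟨t, lt_of_lt_of_le t.2 hαa⟩ : Fin a))
        (fun t : Fin α =>
          ((⟨(Phi β γ (t : ℕ)).1, lt_of_lt_of_le (Phi_fst_lt hβ) hβb⟩ : Fin b),
           (⟨(Phi β γ (t : ℕ)).2,
              lt_of_lt_of_le (Phi_snd_lt hβ hγ (lt_of_lt_of_le t.2 hαβγ)) hγc⟩ : Fin c)))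
        fun t s => ?_
      simp only [Matrix.of_apply, hT]
      have h1 : ((⟨(t : ℕ), lt_of_lt_of_le t.2 hαa⟩ : Fin a) : ℕ) < α := t.2
      by_cases hts : t = s
      · subst hts
        rw [if_pos ⟨h1, rfl⟩, if_pos rfl]
      · rw [if_neg, if_neg (by simpa using hts)]
        rintro ⟨-, heq⟩
        apply hts
        have : Phi β γ (t : ℕ) = Phi β γ (s : ℕ) := by
          rw [heq]
        exact Fin.ext (Phi_inj hβ (lt_of_lt_of_le t.2 hαβγ) (lt_of_lt_of_le s.2 hαβγ) this)
  · -- mode 2 : rank = β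
    refine le_antisymm ?_ ?_
    · refine rank_le_aux _ (fun t : Fin β => (⟨t, lt_of_lt_of_le t.2 hβb⟩ : Fin b)) fun j => ?_
      by_cases hj : (j : ℕ) < β
      · exact Or.inl ⟨⟨(j : ℕ), hj⟩, Fin.ext rfl⟩
      · refine Or.inr ?_
        funext p
        simp only [Matrix.of_apply, hT, Pi.zero_apply]
        rw [if_neg]
        rintro ⟨hp, heq⟩
        have := Phi_fst_lt (γ := γ) (t := ((p.1 : Fin a) : ℕ)) hβ
        rw [heq] at this
        exact hj this
    · refine rank_ge_aux _ (fun t : Fin β => (⟨t, lt_of_lt_of_le t.2 hβb⟩ : Fin b))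
        (fun t : Fin β =>
          ((⟨(t : ℕ), lt_of_lt_of_le t.2 (le_trans hβα hαa)⟩ : Fin a),
           (⟨min (t : ℕ) (γ - 1), lt_of_lt_of_le (by omega) hγc⟩ : Fin c)))
        fun t s => ?_
      simp only [Matrix.of_apply, hT]
      have hsα : (s : ℕ) < α := lt_of_lt_of_le s.2 hβα
      have hphi : Phi β γ (s : ℕ) = ((s : ℕ), min (s : ℕ) (γ - 1)) := Phi_branch1 s.2
      by_cases hts : t = s
      · subst hts
        rw [if_pos ⟨hsα, by rw [hphi]⟩, if_pos rfl]
      · rw [if_neg, if_neg (by simpa using hts)]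
        rintro ⟨-, heq⟩
        rw [hphi] at heq
        exact hts (Fin.ext (Prod.mk.injEq .. ▸ heq).1.symm ▸ rfl)
  · -- mode 3 : rank = γ
    refine le_antisymm ?_ ?_
    · refine rank_le_aux _ (fun t : Fin γ => (⟨t, lt_of_lt_of_le t.2 hγc⟩ : Fin c)) fun l => ?_
      by_cases hl : (l : ℕ) < γ
      · exact Or.inl ⟨⟨(l : ℕ), hl⟩, Fin.ext rfl⟩
      · refine Or.inr ?_
        funext p
        simp only [Matrix.of_apply, hT, Pi.zero_apply]
        rw [if_neg]
        rintro ⟨hp, heq⟩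
        have := Phi_snd_lt (t := ((p.1 : Fin a) : ℕ)) hβ hγ (lt_of_lt_of_le hp hαβγ)
        rw [heq] at this
        exact hl this
    · refine rank_ge_aux _ (fun t : Fin γ => (⟨t, lt_of_lt_of_le t.2 hγc⟩ : Fin c))
        (fun t : Fin γ =>
          ((⟨(t : ℕ), lt_of_lt_of_le t.2 (le_trans hγβ (le_trans hβα hαa))⟩ : Fin a),
           (⟨(t : ℕ), lt_of_lt_of_le t.2 (le_trans hγβ hβb)⟩ : Fin b)))
        fun t s => ?_
      simp only [Matrix.of_apply, hT]
      have hsα : (s : ℕ) < α := lt_of_lt_of_le s.2 (le_trans hγβ hβα)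
      have hphi : Phi β γ (s : ℕ) = ((s : ℕ), (s : ℕ)) := by
        rw [Phi_branch1 (lt_of_lt_of_le s.2 hγβ)]
        congr 1
        omega
      by_cases hts : t = s
      · subst hts
        rw [if_pos ⟨hsα, by rw [hphi]⟩, if_pos rfl]
      · rw [if_neg, if_neg (by simpa using hts)]
        rintro ⟨-, heq⟩
        rw [hphi] at heq
        have : (s : ℕ) = (t : ℕ) := (Prod.mk.injEq .. ▸ heq).2
        exact hts (Fin.ext this.symm)

lemma construct₂ {k : Type*} [Field k] {a b c α β γ : ℕ}
    (hαa : α ≤ a) (hβb : β ≤ b) (hγc : γ ≤ c)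
    (hβα : β ≤ α) (hγα : γ ≤ α) (hαβγ : α ≤ β * γ)
    (hβ : 0 < β) (hγ : 0 < γ) :
    ∃ T : Fin a → Fin b → Fin c → k,
      (Matrix.of fun i (p : Fin b × Fin c) => T i p.1 p.2).rank = α ∧
      (Matrix.of fun j (p : Fin a × Fin c) => T p.1 j p.2).rank = β ∧
      (Matrix.of fun l (p : Fin a × Fin b) => T p.1 p.2 l).rank = γ := by
  rcases le_or_gt γ β with h | h
  · exact construct_sorted hαa hβb hγc hβα h hαβγ hβ hγ
  · obtain ⟨S, hS1, hS2, hS3⟩ :=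
      construct_sorted (k := k) (a := a) (b := c) (c := b) hαa hγc hβb hγα h.le
        (by rw [mul_comm] at hαβγ; exact hαβγ) hγ hβ
    refine ⟨fun i j l => S i l j, ?_, ?_, ?_⟩
    · have he : (Matrix.of fun i (p : Fin b × Fin c) => S i p.2 p.1) =
          (Matrix.of fun i (p : Fin c × Fin b) => S i p.1 p.2).submatrix id
            (Equiv.prodComm (Fin b) (Fin c)) := rfl
      rw [he, rank_submatrix_id_equiv, hS1]
    · exact hS3
    · exact hS2

/-- Carlini–Kleppe characterization for order-3 tensors: there exists a tensor
`T ∈ k^{n₁} ⊗ k^{n₂} ⊗ k^{n₃}` with multilinear rank `(μ₁, μ₂, μ₃)` if and only if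
`μᵢ ≤ nᵢ` for all `i` and `μ₁ ≤ μ₂μ₃`, `μ₂ ≤ μ₁μ₃`, `μ₃ ≤ μ₁μ₂`. -/
theorem exists_tensor_with_multilinear_rank_iff {k : Type*} [Field k] [Infinite k]
    {n₁ n₂ n₃ μ₁ μ₂ μ₃ : ℕ}
    (hn₁ : 0 < n₁) (hn₂ : 0 < n₂) (hn₃ : 0 < n₃)
    (hμ₁ : 0 < μ₁) (hμ₂ : 0 < μ₂) (hμ₃ : 0 < μ₃) :
    (∃ T : Fin n₁ → Fin n₂ → Fin n₃ → k,
        (Matrix.of fun i (p : Fin n₂ × Fin n₃) => T i p.1 p.2).rank = μ₁ ∧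
        (Matrix.of fun j (p : Fin n₁ × Fin n₃) => T p.1 j p.2).rank = μ₂ ∧
        (Matrix.of fun l (p : Fin n₁ × Fin n₂) => T p.1 p.2 l).rank = μ₃) ↔
      (μ₁ ≤ n₁ ∧ μ₂ ≤ n₂ ∧ μ₃ ≤ n₃ ∧ μ₁ ≤ μ₂ * μ₃ ∧ μ₂ ≤ μ₁ * μ₃ ∧ μ₃ ≤ μ₁ * μ₂) := by
  constructor
  · rintro ⟨T, h1, h2, h3⟩
    refine ⟨?_, ?_, ?_, ?_, ?_, ?_⟩
    · rw [← h1]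
      exact (Matrix.rank_le_card_height _).trans (Fintype.card_fin _).le
    · rw [← h2]
      exact (Matrix.rank_le_card_height _).trans (Fintype.card_fin _).le
    · rw [← h3]
      exact (Matrix.rank_le_card_height _).trans (Fintype.card_fin _).le
    · rw [← h1, ← h2, ← h3]
      exact flatten_rank_le_mul T
    · rw [← h1, ← h2, ← h3]
      have key := flatten_rank_le_mul (fun j i l => T i j l)
      have he : (Matrix.of fun z (p : Fin n₂ × Fin n₁) => T p.2 p.1 z) =
          (Matrix.of fun l (p : Fin n₁ × Fin n₂) => T p.1 p.2 l).submatrix id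
            (Equiv.prodComm (Fin n₂) (Fin n₁)) := rfl
      rw [he, rank_submatrix_id_equiv] at key
      exact key
    · rw [← h1, ← h2, ← h3]
      have key := flatten_rank_le_mul (fun l i j => T i j l)
      have he1 : (Matrix.of fun y (p : Fin n₃ × Fin n₂) => T y p.2 p.1) =
          (Matrix.of fun i (p : Fin n₂ × Fin n₃) => T i p.1 p.2).submatrix id
            (Equiv.prodComm (Fin n₃) (Fin n₂)) := rfl
      have he2 : (Matrix.of fun z (p : Fin n₃ × Fin n₁) => T p.2 z p.1) =
          (Matrix.of fun j (p : Fin n₁ × Fin n₃) => T p.1 j p.2).submatrix id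
            (Equiv.prodComm (Fin n₃) (Fin n₁)) := rfl
      rw [he1, he2, rank_submatrix_id_equiv, rank_submatrix_id_equiv] at key
      exact key
  · rintro ⟨h1, h2, h3, h4, h5, h6⟩
    rcases le_total μ₂ μ₁ with h21 | h12
    · rcases le_total μ₃ μ₁ with h31 | h13
      · exact construct₂ h1 h2 h3 h21 h31 h4 hμ₂ hμ₃
      · -- μ₃ is max
        obtain ⟨S, hS1, hS2, hS3⟩ :=
          construct₂ (k := k) (a := n₃) (b := n₁) (c := n₂) h3 h1 h2 h13 (h21.trans h13) h6 hμ₁ hμ₂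
        refine ⟨fun i j l => S l i j, ?_, ?_, ?_⟩
        · have he : (Matrix.of fun i (p : Fin n₂ × Fin n₃) => S p.2 i p.1) =
              (Matrix.of fun y (p : Fin n₃ × Fin n₂) => S p.1 y p.2).submatrix id
                (Equiv.prodComm (Fin n₂) (Fin n₃)) := rfl
          rw [he, rank_submatrix_id_equiv, hS2]
        · have he : (Matrix.of fun j (p : Fin n₁ × Fin n₃) => S p.2 p.1 j) =
              (Matrix.of fun z (p : Fin n₃ × Fin n₁) => S p.1 p.2 z).submatrix id
                (Equiv.prodComm (Fin n₁) (Fin n₃)) := rfl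
          rw [he, rank_submatrix_id_equiv, hS3]
        · exact hS1
    · rcases le_total μ₃ μ₂ with h32 | h23
      · -- μ₂ is max
        obtain ⟨S, hS1, hS2, hS3⟩ :=
          construct₂ (k := k) (a := n₂) (b := n₁) (c := n₃) h2 h1 h3 h12 h32 h5 hμ₁ hμ₃
        refine ⟨fun i j l => S j i l, ?_, ?_, ?_⟩
        · exact hS2
        · exact hS1
        · have he : (Matrix.of fun l (p : Fin n₁ × Fin n₂) => S p.2 p.1 l) =
              (Matrix.of fun z (p : Fin n₂ × Fin n₁) => S p.1 p.2 z).submatrix id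
                (Equiv.prodComm (Fin n₁) (Fin n₂)) := rfl
          rw [he, rank_submatrix_id_equiv, hS3]
      · -- μ₃ is max
        obtain ⟨S, hS1, hS2, hS3⟩ :=
          construct₂ (k := k) (a := n₃) (b := n₁) (c := n₂) h3 h1 h2 (h12.trans h23) h23 h6 hμ₁ hμ₂
        refine ⟨fun i j l => S l i j, ?_, ?_, ?_⟩
        · have he : (Matrix.of fun i (p : Fin n₂ × Fin n₃) => S p.2 i p.1) =
              (Matrix.of fun y (p : Fin n₃ × Fin n₂) => S p.1 y p.2).submatrix id
                (Equiv.prodComm (Fin n₂) (Fin n₃)) := rfl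
          rw [he, rank_submatrix_id_equiv, hS2]
        · have he : (Matrix.of fun j (p : Fin n₁ × Fin n₃) => S p.2 p.1 j) =
              (Matrix.of fun z (p : Fin n₃ × Fin n₁) => S p.1 p.2 z).submatrix id
                (Equiv.prodComm (Fin n₁) (Fin n₃)) := rfl
          rw [he, rank_submatrix_id_equiv, hS3]
        · exact hS1
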